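/- For h(X) ∈ F_{q^2}[X] and a positive integer r, the polynomial f(X) = X^r · h(X^{q-1}) permutes F_{q^2} if and only if gcd(r, q−1) = 1 and the map x ↦ x^r · h(x)^{q-1} permutes μ_{q+1}. -/

import Mathlib

open Polynomial

private lemma bezout_pow_eq_one {G : Type*} [Group G] {r m : ℕ}
    (hco : Nat.gcd r m = 1) {u : G} (h1 : u ^ m = 1) (h2 : u ^ r = 1) : u = 1 := by
  have hb : (1 : ℤ) = r * Nat.gcdA r m + m * Nat.gcdB r m := by
    have := Nat.gcd_eq_gcd_ab r m
    rw [hco] at this; exact_mod_cast this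
  calc u = u ^ (1 : ℤ) := (zpow_one u).symm
    _ = (u ^ (r : ℤ)) ^ Nat.gcdA r m * (u ^ (m : ℤ)) ^ Nat.gcdB r m := by
        rw [hb, zpow_add, zpow_mul, zpow_mul]
    _ = 1 := by rw [zpow_natCast, zpow_natCast, h1, h2]; simp

private lemma bezout_pow_surj {G : Type*} [Group G] {r m : ℕ}
    (hco : Nat.gcd r m = 1) {t : G} (h1 : t ^ m = 1) :
    ∃ s : G, s ^ m = 1 ∧ s ^ r = t := by
  have hb : (1 : ℤ) = r * Nat.gcdA r m + m * Nat.gcdB r m := by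
    have := Nat.gcd_eq_gcd_ab r m
    rw [hco] at this; exact_mod_cast this
  refine ⟨t ^ Nat.gcdA r m, ?_, ?_⟩
  · rw [← zpow_natCast, ← zpow_mul, mul_comm, zpow_mul, zpow_natCast, h1, one_zpow]
  · have hm : t ^ (m : ℤ) = 1 := by rw [zpow_natCast, h1]
    calc (t ^ Nat.gcdA r m) ^ r = t ^ (Nat.gcdA r m * r) := by
          rw [← zpow_natCast (t ^ Nat.gcdA r m), ← zpow_mul]
      _ = t ^ ((1 : ℤ) - m * Nat.gcdB r m) := by rw [hb]; ring_nf
      _ = t := by rw [zpow_sub, zpow_one, zpow_mul, hm, one_zpow]; simp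

private lemma pow_surj_mu {G : Type*} [Group G] [Fintype G] [IsCyclic G] {q : ℕ}
    (hcard : Fintype.card G = (q - 1) * (q + 1)) {y : G} (hy : y ^ (q + 1) = 1) :
    ∃ x : G, x ^ (q - 1) = y := by
  obtain ⟨g, hg⟩ := IsCyclic.exists_generator (α := G)
  obtain ⟨k, hk⟩ : ∃ k : ℕ, g ^ k = y := mem_powers_iff_mem_zpowers.2 (hg y)
  have hord : orderOf g = Fintype.card G := by rw [orderOf_eq_card_of_forall_mem_zpowers hg, Nat.card_eq_fintype_card]
  have hdvd : (q - 1) * (q + 1) ∣ k * (q + 1) := by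
    rw [← hcard, ← hord]
    apply orderOf_dvd_of_pow_eq_one
    rw [pow_mul, hk, hy]
  have : (q - 1) ∣ k := (Nat.mul_dvd_mul_iff_right (Nat.succ_pos q)).1 hdvd
  obtain ⟨c, hc⟩ := this
  exact ⟨g ^ c, by rw [← pow_mul, mul_comm, ← hc, hk]⟩

private lemma exists_ne_one_pow_eq_one {G : Type*} [Group G] [Fintype G] [IsCyclic G] {d : ℕ}
    (hd : 1 < d) (hdvd : d ∣ Fintype.card G) : ∃ ζ : G, ζ ≠ 1 ∧ ζ ^ d = 1 := by
  obtain ⟨g, hg⟩ := IsCyclic.exists_generator (α := G)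
  have hord : orderOf g = Fintype.card G := by rw [orderOf_eq_card_of_forall_mem_zpowers hg, Nat.card_eq_fintype_card]
  obtain ⟨m, hm⟩ := hdvd
  refine ⟨g ^ m, ?_, ?_⟩
  · intro hone
    have hdvd' : orderOf g ∣ m := orderOf_dvd_of_pow_eq_one hone
    have hm0 : 0 < m := by
      rcases Nat.eq_zero_or_pos m with h0 | h0
      · exfalso; rw [h0, mul_zero] at hm
        exact absurd hm (Fintype.card_pos (α := G)).ne'
      · exact h0
    have h1 := Nat.le_of_dvd hm0 hdvd'
    rw [hord, hm] at h1
    have hcp := Fintype.card_pos (α := G)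
    have h2 : m < d * m := (Nat.lt_mul_iff_one_lt_left hm0).2 hd
    omega
  · rw [← pow_mul, mul_comm, ← hm, ← hord, pow_orderOf_eq_one]

/-- For `h(X) ∈ F_{q^2}[X]`, `f(X) = X^r · h(X^{q-1})` permutes `F_{q^2}` iff
`gcd(r, q-1) = 1` and `x ↦ x^r · h(x)^{q-1}` permutes `μ_{q+1}`. -/
theorem stmt_4 (q r : ℕ) (hr : 0 < r)
    (p n : ℕ) (hp : p.Prime) (hn : 0 < n) (hqpn : q = p ^ n)
    (F : Type*) [Field F] [Fintype F] (hF : Fintype.card F = q ^ 2)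
    (h : Polynomial F) :
    Function.Bijective (fun x : F => x ^ r * h.eval (x ^ (q - 1))) ↔
      (Nat.gcd r (q - 1) = 1 ∧
        Set.BijOn (fun x : F => x ^ r * (h.eval x) ^ (q - 1))
          {x : F | x ^ (q + 1) = 1} {x : F | x ^ (q + 1) = 1}) := by
  classical
  have hq2 : 2 ≤ q := by
    rw [hqpn]
    calc 2 ≤ p := hp.two_le
      _ ≤ p ^ n := Nat.le_self_pow hn.ne' p
  set μ : Set F := {x : F | x ^ (q + 1) = 1} with hμdef
  have hfact : q ^ 2 - 1 = (q - 1) * (q + 1) := by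
    obtain ⟨k, rfl⟩ := Nat.exists_eq_add_of_le hq2
    apply Nat.sub_eq_of_eq_add
    have h2 : 2 + k - 1 = k + 1 := by omega
    rw [h2]; ring
  have hcardu : Fintype.card Fˣ = (q - 1) * (q + 1) := by
    rw [Fintype.card_units, hF, hfact]
  have hμ0 : ∀ x ∈ μ, x ≠ 0 := by
    rintro x hx rfl
    rw [hμdef, Set.mem_setOf_eq, zero_pow (Nat.succ_ne_zero q)] at hx
    exact zero_ne_one hx
  have hpow1 : ∀ x : F, x ≠ 0 → x ^ ((q - 1) * (q + 1)) = 1 := by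
    intro x hx
    rw [← hfact, ← hF]
    exact FiniteField.pow_card_sub_one_eq_one x hx
  have hmemμ : ∀ x : F, x ≠ 0 → x ^ (q - 1) ∈ μ := by
    intro x hx
    show (x ^ (q - 1)) ^ (q + 1) = 1
    rw [← pow_mul]; exact hpow1 x hx
  constructor
  · intro hf
    have hgcd : Nat.gcd r (q - 1) = 1 := by
      by_contra hne
      set d := Nat.gcd r (q - 1) with hd
      have hd1 : 1 < d := by
        have hdpos : 0 < d := Nat.gcd_pos_of_pos_left _ hr
        omega
      have hdq : d ∣ q - 1 := Nat.gcd_dvd_right r (q - 1)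
      have hdr : d ∣ r := Nat.gcd_dvd_left r (q - 1)
      have hdcard : d ∣ Fintype.card Fˣ := by
        rw [hcardu]; exact hdq.trans (Dvd.intro _ rfl)
      obtain ⟨ζ, hζ1, hζd⟩ := exists_ne_one_pow_eq_one hd1 hdcard
      have hζdF : (ζ : F) ^ d = 1 := by
        have := congrArg Units.val hζd
        simpa using this
      have hζr : (ζ : F) ^ r = 1 := by
        obtain ⟨c, hc⟩ := hdr
        rw [hc, pow_mul, hζdF, one_pow]
      have hζq : (ζ : F) ^ (q - 1) = 1 := by
        obtain ⟨c, hc⟩ := hdq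
        rw [hc, pow_mul, hζdF, one_pow]
      have heq : (fun x : F => x ^ r * h.eval (x ^ (q - 1))) (ζ : F)
          = (fun x : F => x ^ r * h.eval (x ^ (q - 1))) 1 := by
        simp only [hζr, hζq, one_pow]
      have := hf.injective heq
      refine hζ1 ?_
      apply Units.ext
      simpa using this
    have hne0 : ∀ y ∈ μ, h.eval y ≠ 0 := by
      intro y hy hy0
      have hyne : y ≠ 0 := hμ0 y hy
      have hyu : (Units.mk0 y hyne) ^ (q + 1) = 1 := by
        apply Units.ext
        simp only [Units.val_pow_eq_pow_val, Units.val_mk0, Units.val_one]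
        exact hy
      obtain ⟨xu, hxu⟩ := pow_surj_mu hcardu hyu
      have hxq : ((xu : F)) ^ (q - 1) = y := by
        have := congrArg Units.val hxu
        simpa using this
      have heq : (fun x : F => x ^ r * h.eval (x ^ (q - 1))) (xu : F)
          = (fun x : F => x ^ r * h.eval (x ^ (q - 1))) 0 := by
        simp only [hxq, hy0, mul_zero, zero_pow hr.ne']
        rw [zero_pow (by omega : q - 1 ≠ 0)]
        simp
      exact xu.ne_zero (hf.injective heq)
    have hmaps : Set.MapsTo (fun x : F => x ^ r * (h.eval x) ^ (q - 1)) μ μ := by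
      intro y hy
      have h1 : y ^ (q + 1) = 1 := hy
      show (y ^ r * (h.eval y) ^ (q - 1)) ^ (q + 1) = 1
      rw [mul_pow, ← pow_mul, ← pow_mul, mul_comm r (q + 1), pow_mul, h1, one_pow, one_mul,
        hpow1 _ (hne0 y hy)]
    have hinj : Set.InjOn (fun x : F => x ^ r * (h.eval x) ^ (q - 1)) μ := by
      intro y1 hy1 y2 hy2 hgeq
      simp only [] at hgeq
      have hy1ne := hμ0 y1 hy1
      have hy2ne := hμ0 y2 hy2
      have hy1u : (Units.mk0 y1 hy1ne) ^ (q + 1) = 1 := by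
        apply Units.ext
        simp only [Units.val_pow_eq_pow_val, Units.val_mk0, Units.val_one]
        exact hy1
      have hy2u : (Units.mk0 y2 hy2ne) ^ (q + 1) = 1 := by
        apply Units.ext
        simp only [Units.val_pow_eq_pow_val, Units.val_mk0, Units.val_one]
        exact hy2
      obtain ⟨x1, hx1⟩ := pow_surj_mu hcardu hy1u
      obtain ⟨x2, hx2⟩ := pow_surj_mu hcardu hy2u
      have hx1F : ((x1 : F)) ^ (q - 1) = y1 := by
        have := congrArg Units.val hx1; simpa using this
      have hx2F : ((x2 : F)) ^ (q - 1) = y2 := by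
        have := congrArg Units.val hx2; simpa using this
      have hfx1 : (x1 : F) ^ r * h.eval y1 ≠ 0 :=
        mul_ne_zero (pow_ne_zero _ x1.ne_zero) (hne0 y1 hy1)
      have hfx2 : (x2 : F) ^ r * h.eval y2 ≠ 0 :=
        mul_ne_zero (pow_ne_zero _ x2.ne_zero) (hne0 y2 hy2)
      have hkey : ((x1 : F) ^ r * h.eval y1) ^ (q - 1)
          = ((x2 : F) ^ r * h.eval y2) ^ (q - 1) := by
        calc ((x1 : F) ^ r * h.eval y1) ^ (q - 1)
            = y1 ^ r * (h.eval y1) ^ (q - 1) := by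
              rw [mul_pow, ← pow_mul, mul_comm r (q - 1), pow_mul, hx1F]
          _ = y2 ^ r * (h.eval y2) ^ (q - 1) := hgeq
          _ = ((x2 : F) ^ r * h.eval y2) ^ (q - 1) := by
              rw [mul_pow, ← pow_mul, mul_comm r (q - 1), pow_mul, hx2F]
      set a1 : Fˣ := Units.mk0 _ hfx1 with ha1
      set a2 : Fˣ := Units.mk0 _ hfx2 with ha2
      have hpoweq : a1 ^ (q - 1) = a2 ^ (q - 1) := by
        apply Units.ext
        simp only [Units.val_pow_eq_pow_val, ha1, ha2, Units.val_mk0]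
        exact hkey
      have htone : (a1 * a2⁻¹) ^ (q - 1) = 1 := by
        rw [mul_pow, hpoweq, inv_pow, mul_inv_cancel]
      obtain ⟨s, hs1, hs2⟩ := bezout_pow_surj hgcd htone
      have hs1F : (s : F) ^ (q - 1) = 1 := by
        have := congrArg Units.val hs1; simpa using this
      have hs2F : (s : F) ^ r = ((x1 : F) ^ r * h.eval y1) * ((x2 : F) ^ r * h.eval y2)⁻¹ := by
        have := congrArg Units.val hs2
        simpa [ha1, ha2, Units.val_mul, Units.val_inv_eq_inv_val] using this
      have heq2 : (fun x : F => x ^ r * h.eval (x ^ (q - 1))) ((s : F) * (x2 : F))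
          = (fun x : F => x ^ r * h.eval (x ^ (q - 1))) (x1 : F) := by
        simp only [mul_pow, hs1F, one_mul, hx2F, hx1F, hs2F]
        field_simp
        ring_nf
        rw [mul_inv_cancel_right₀ (hne0 y2 hy2)]
      have hxeq : (s : F) * (x2 : F) = (x1 : F) := hf.injective heq2
      calc y1 = ((x1 : F)) ^ (q - 1) := hx1F.symm
        _ = ((s : F) * (x2 : F)) ^ (q - 1) := by rw [hxeq]
        _ = y2 := by rw [mul_pow, hs1F, one_mul, hx2F]
    exact ⟨hgcd, ((Set.toFinite μ).injOn_iff_bijOn_of_mapsTo hmaps).1 hinj⟩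
  · rintro ⟨hgcd, hbij⟩
    have hne0 : ∀ y ∈ μ, h.eval y ≠ 0 := by
      intro y hy hy0
      have hmem := hbij.mapsTo hy
      rw [hμdef, Set.mem_setOf_eq] at hmem
      rw [hy0, zero_pow (by omega : q - 1 ≠ 0), mul_zero,
        zero_pow (Nat.succ_ne_zero q)] at hmem
      exact zero_ne_one hmem
    have hfne : ∀ x : F, x ≠ 0 → x ^ r * h.eval (x ^ (q - 1)) ≠ 0 := fun x hx =>
      mul_ne_zero (pow_ne_zero _ hx) (hne0 _ (hmemμ x hx))
    have hinj : Function.Injective (fun x : F => x ^ r * h.eval (x ^ (q - 1))) := by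
      intro x1 x2 heq
      simp only [] at heq
      by_cases h1 : x1 = 0
      · subst h1
        by_contra hne
        have h2 : x2 ≠ 0 := fun hc => hne hc.symm
        apply hfne x2 h2
        rw [← heq, zero_pow hr.ne', zero_mul]
      by_cases h2 : x2 = 0
      · exfalso
        subst h2
        apply hfne x1 h1
        rw [heq, zero_pow hr.ne', zero_mul]
      have hy1 := hmemμ x1 h1
      have hy2 := hmemμ x2 h2
      have hkey : (fun x : F => x ^ r * (h.eval x) ^ (q - 1)) (x1 ^ (q - 1))
          = (fun x : F => x ^ r * (h.eval x) ^ (q - 1)) (x2 ^ (q - 1)) := by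
        simp only []
        calc (x1 ^ (q - 1)) ^ r * (h.eval (x1 ^ (q - 1))) ^ (q - 1)
            = (x1 ^ r * h.eval (x1 ^ (q - 1))) ^ (q - 1) := by
              rw [mul_pow, ← pow_mul, mul_comm (q - 1) r, pow_mul]
          _ = (x2 ^ r * h.eval (x2 ^ (q - 1))) ^ (q - 1) := by rw [heq]
          _ = (x2 ^ (q - 1)) ^ r * (h.eval (x2 ^ (q - 1))) ^ (q - 1) := by
              rw [mul_pow, ← pow_mul, mul_comm r (q - 1), pow_mul]
      have hyeq : x1 ^ (q - 1) = x2 ^ (q - 1) := hbij.injOn hy1 hy2 hkey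
      have hre : x1 ^ r = x2 ^ r := by
        apply mul_right_cancel₀ (hne0 _ hy1)
        rw [hyeq] at heq ⊢
        exact heq
      have e1 : (Units.mk0 x1 h1 * (Units.mk0 x2 h2)⁻¹) ^ (q - 1) = 1 := by
        apply Units.ext
        simp only [Units.val_pow_eq_pow_val, Units.val_mul, Units.val_inv_eq_inv_val,
          Units.val_mk0, Units.val_one]
        rw [mul_pow, inv_pow, hyeq, mul_inv_cancel₀ (pow_ne_zero _ h2)]
      have e2 : (Units.mk0 x1 h1 * (Units.mk0 x2 h2)⁻¹) ^ r = 1 := by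
        apply Units.ext
        simp only [Units.val_pow_eq_pow_val, Units.val_mul, Units.val_inv_eq_inv_val,
          Units.val_mk0, Units.val_one]
        rw [mul_pow, inv_pow, hre, mul_inv_cancel₀ (pow_ne_zero _ h2)]
      have hu : Units.mk0 x1 h1 = Units.mk0 x2 h2 :=
        mul_inv_eq_one.1 (bezout_pow_eq_one hgcd e1 e2)
      simpa using congrArg Units.val hu
    exact Finite.injective_iff_bijective.1 hinj
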